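/- (Noether's theorem for variational symmetries, in coordinates.) Let L : J → ℝ be a smooth Lagrangian and let X_α, X^i : ℝ^k × ℝ^n → ℝ (1 ≤ α ≤ k, 1 ≤ i ≤ n) be smooth components of a vector field X = X_α ∂/∂x^α + X^i ∂/∂q^i on E = ℝ^k × ℝ^n satisfying at every point (x,q,v) ∈ J the infinitesimal variational symmetry condition X¹(L) + L · ∑_α (∂X_α/∂x^α + v^j_α ∂X_α/∂q^j) = 0, where X¹(L) = X_α ∂L/∂x^α + X^i ∂L/∂q^i + (D_α X^i − v^i_β D_α X_β) ∂L/∂v^i_α with D_α = ∂/∂x^α + v^j_α ∂/∂q^j acting on functions of (x,q). Then the functions G^α(x,q,v) = (L δ^α_β − ∂L/∂v^i_α · v^i_β) X_β(x,q) + ∂L/∂v^i_α · X^i(x,q), which equal Θ^α_L(X¹), define a conservation law for the Euler–Lagrange equations of L. -/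

import Mathlib

open Function

noncomputable section

/-- The first jet space `J = ℝᵏ × ℝⁿ × (Fin n → Fin k → ℝ)`,
with coordinates `(xᵅ, qⁱ, vⁱ_α)`. -/
abbrev Jet (k n : ℕ) : Type :=
  (Fin k → ℝ) × (Fin n → ℝ) × (Fin n → Fin k → ℝ)

variable {k n : ℕ}

/-- Partial derivative `∂F/∂xᵅ` of a function on the jet space. -/
noncomputable def pdX (F : Jet k n → ℝ) (α : Fin k) (z : Jet k n) : ℝ :=
  deriv (fun t => F (Function.update z.1 α t, z.2.1, z.2.2)) (z.1 α)

/-- Partial derivative `∂F/∂qⁱ` of a function on the jet space. -/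
noncomputable def pdQ (F : Jet k n → ℝ) (i : Fin n) (z : Jet k n) : ℝ :=
  deriv (fun t => F (z.1, Function.update z.2.1 i t, z.2.2)) (z.2.1 i)

/-- Partial derivative `∂F/∂vⁱ_α` of a function on the jet space. -/
noncomputable def pdV (F : Jet k n → ℝ) (i : Fin n) (α : Fin k) (z : Jet k n) : ℝ :=
  deriv (fun t => F (z.1, z.2.1,
    Function.update z.2.2 i (Function.update (z.2.2 i) α t))) (z.2.2 i α)

/-- Partial derivative `∂φⁱ/∂xᵅ` of a map `φ : ℝᵏ → ℝⁿ`. -/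
noncomputable def pD (φ : (Fin k → ℝ) → (Fin n → ℝ)) (i : Fin n) (α : Fin k)
    (x : Fin k → ℝ) : ℝ :=
  deriv (fun t => φ (Function.update x α t) i) (x α)

/-- Second partial derivative `∂²φⁱ/∂xᵅ∂xᵝ` of a map `φ : ℝᵏ → ℝⁿ`. -/
noncomputable def pD2 (φ : (Fin k → ℝ) → (Fin n → ℝ)) (i : Fin n) (α β : Fin k)
    (x : Fin k → ℝ) : ℝ :=
  deriv (fun t => pD φ i β (Function.update x α t)) (x α)

/-- First prolongation `j¹φ : ℝᵏ → J` of `φ : ℝᵏ → ℝⁿ`. -/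
noncomputable def j1 (φ : (Fin k → ℝ) → (Fin n → ℝ)) (x : Fin k → ℝ) : Jet k n :=
  (x, φ x, fun i α => pD φ i α x)

/-- `φ` is a smooth solution of the Euler–Lagrange equations of the Lagrangian `L`:
`∑_α ∂/∂xᵅ[(∂L/∂vⁱ_α) ∘ j¹φ] = (∂L/∂qⁱ) ∘ j¹φ` for all `i`. -/
def IsELSolution (L : Jet k n → ℝ) (φ : (Fin k → ℝ) → (Fin n → ℝ)) : Prop :=
  ContDiff ℝ (⊤ : ℕ∞) φ ∧
  ∀ (i : Fin n) (x : Fin k → ℝ),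
    (∑ α : Fin k, deriv (fun t => pdV L i α (j1 φ (Function.update x α t))) (x α))
      = pdQ L i (j1 φ x)

/-- `G = (G¹, …, Gᵏ)` is a conservation law for the Euler–Lagrange equations of `L`:
`∑_α ∂/∂xᵅ(Gᵅ ∘ j¹φ) = 0` for every solution `φ`. -/
def IsConservationLaw (L : Jet k n → ℝ) (G : Fin k → Jet k n → ℝ) : Prop :=
  ∀ φ : (Fin k → ℝ) → (Fin n → ℝ), IsELSolution L φ →
    ∀ x : Fin k → ℝ,
      (∑ α : Fin k, deriv (fun t => G α (j1 φ (Function.update x α t))) (x α)) = 0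

/-- Partial derivative `∂f/∂xᵅ` of a function on `E = ℝᵏ × ℝⁿ`. -/
noncomputable def pdEX (f : (Fin k → ℝ) → (Fin n → ℝ) → ℝ) (α : Fin k)
    (x : Fin k → ℝ) (q : Fin n → ℝ) : ℝ :=
  deriv (fun t => f (Function.update x α t) q) (x α)

/-- Partial derivative `∂f/∂qⁱ` of a function on `E = ℝᵏ × ℝⁿ`. -/
noncomputable def pdEQ (f : (Fin k → ℝ) → (Fin n → ℝ) → ℝ) (i : Fin n)
    (x : Fin k → ℝ) (q : Fin n → ℝ) : ℝ :=
  deriv (fun t => f x (Function.update q i t)) (q i)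

/-- Total derivative `D_α = ∂/∂xᵅ + vʲ_α ∂/∂qʲ` acting on a function of `(x, q)`,
evaluated at a jet point `z = (x, q, v)`. -/
noncomputable def totalD (f : (Fin k → ℝ) → (Fin n → ℝ) → ℝ) (α : Fin k)
    (z : Jet k n) : ℝ :=
  pdEX f α z.1 z.2.1 + ∑ j : Fin n, z.2.2 j α * pdEQ f j z.1 z.2.1

lemma update_eq_line {ι : Type*} [DecidableEq ι] (x : ι → ℝ) (α : ι) (t : ℝ) :
    Function.update x α t = x + (t - x α) • (Pi.single α (1:ℝ) : ι → ℝ) := by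
  funext j
  rcases eq_or_ne j α with h | h
  · subst h; simp
  · simp [Function.update_of_ne h, Pi.single_eq_of_ne h]

lemma hasDerivAt_line {E F : Type*} [NormedAddCommGroup E] [NormedSpace ℝ E]
    [NormedAddCommGroup F] [NormedSpace ℝ F]
    {f : E → F} {z : E} (hf : DifferentiableAt ℝ f z) (w : E) (c : ℝ) :
    HasDerivAt (fun t => f (z + (t - c) • w)) (fderiv ℝ f z w) c := by
  have hcurve : HasDerivAt (fun t : ℝ => z + (t - c) • w) w c := by
    simpa using (((hasDerivAt_id c).sub_const c).smul_const w).const_add z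
  have hz : z + ((c : ℝ) - c) • w = z := by simp
  have hf' : HasFDerivAt f (fderiv ℝ f z) (z + ((c:ℝ) - c) • w) := by
    rw [hz]; exact hf.hasFDerivAt
  exact hf'.comp_hasDerivAt c hcurve

def eX (k n : ℕ) (α : Fin k) : Jet k n := (Pi.single α 1, 0, 0)
def eQ (k n : ℕ) (i : Fin n) : Jet k n := (0, Pi.single i 1, 0)
def eV (k n : ℕ) (i : Fin n) (α : Fin k) : Jet k n :=
  (0, 0, Pi.single i (Pi.single α 1))

lemma curveX_eq (z : Jet k n) (α : Fin k) (t : ℝ) :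
    ((Function.update z.1 α t, z.2.1, z.2.2) : Jet k n)
      = z + (t - z.1 α) • eX k n α := by
  refine Prod.ext ?_ (Prod.ext ?_ ?_) <;>
    simp [eX, update_eq_line, Prod.ext_iff]

lemma curveQ_eq (z : Jet k n) (i : Fin n) (t : ℝ) :
    ((z.1, Function.update z.2.1 i t, z.2.2) : Jet k n)
      = z + (t - z.2.1 i) • eQ k n i := by
  refine Prod.ext ?_ (Prod.ext ?_ ?_) <;>
    simp [eQ, update_eq_line, Prod.ext_iff]

lemma updV_eq (v : Fin n → Fin k → ℝ) (i : Fin n) (α : Fin k) (t : ℝ) :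
    Function.update v i (Function.update (v i) α t)
      = v + (t - v i α) • (Pi.single i (Pi.single α 1) : Fin n → Fin k → ℝ) := by
  funext j
  rcases eq_or_ne j i with h | h
  · subst h; simp [update_eq_line]
  · simp [Function.update_of_ne h, Pi.single_eq_of_ne h]

lemma curveV_eq (z : Jet k n) (i : Fin n) (α : Fin k) (t : ℝ) :
    ((z.1, z.2.1, Function.update z.2.2 i (Function.update (z.2.2 i) α t)) : Jet k n)
      = z + (t - z.2.2 i α) • eV k n i α := by
  refine Prod.ext ?_ (Prod.ext ?_ ?_) <;>
    simp [eV, updV_eq, Prod.ext_iff]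

lemma hasDerivAt_pdX {F : Jet k n → ℝ} {z : Jet k n} (hF : DifferentiableAt ℝ F z)
    (α : Fin k) :
    HasDerivAt (fun t => F (Function.update z.1 α t, z.2.1, z.2.2))
      (fderiv ℝ F z (eX k n α)) (z.1 α) := by
  have := hasDerivAt_line hF (eX k n α) (z.1 α)
  simpa [← curveX_eq] using this

lemma pdX_eq {F : Jet k n → ℝ} {z : Jet k n} (hF : DifferentiableAt ℝ F z) (α : Fin k) :
    pdX F α z = fderiv ℝ F z (eX k n α) := (hasDerivAt_pdX hF α).deriv

lemma hasDerivAt_pdQ {F : Jet k n → ℝ} {z : Jet k n} (hF : DifferentiableAt ℝ F z)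
    (i : Fin n) :
    HasDerivAt (fun t => F (z.1, Function.update z.2.1 i t, z.2.2))
      (fderiv ℝ F z (eQ k n i)) (z.2.1 i) := by
  have := hasDerivAt_line hF (eQ k n i) (z.2.1 i)
  simpa [← curveQ_eq] using this

lemma pdQ_eq {F : Jet k n → ℝ} {z : Jet k n} (hF : DifferentiableAt ℝ F z) (i : Fin n) :
    pdQ F i z = fderiv ℝ F z (eQ k n i) := (hasDerivAt_pdQ hF i).deriv

lemma hasDerivAt_pdV {F : Jet k n → ℝ} {z : Jet k n} (hF : DifferentiableAt ℝ F z)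
    (i : Fin n) (α : Fin k) :
    HasDerivAt (fun t => F (z.1, z.2.1,
        Function.update z.2.2 i (Function.update (z.2.2 i) α t)))
      (fderiv ℝ F z (eV k n i α)) (z.2.2 i α) := by
  have := hasDerivAt_line hF (eV k n i α) (z.2.2 i α)
  simpa [← curveV_eq] using this

lemma pdV_eq {F : Jet k n → ℝ} {z : Jet k n} (hF : DifferentiableAt ℝ F z)
    (i : Fin n) (α : Fin k) :
    pdV F i α z = fderiv ℝ F z (eV k n i α) := (hasDerivAt_pdV hF i α).deriv

lemma hasDerivAt_updPhi {φ : (Fin k → ℝ) → (Fin n → ℝ)} {x : Fin k → ℝ}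
    (hφ : DifferentiableAt ℝ φ x) (α : Fin k) :
    HasDerivAt (fun t => φ (Function.update x α t))
      (fderiv ℝ φ x (Pi.single α 1)) (x α) := by
  have := hasDerivAt_line hφ (Pi.single α 1) (x α)
  simpa [← update_eq_line] using this

lemma pD_eq {φ : (Fin k → ℝ) → (Fin n → ℝ)} {x : Fin k → ℝ}
    (hφ : DifferentiableAt ℝ φ x) (i : Fin n) (α : Fin k) :
    pD φ i α x = fderiv ℝ φ x (Pi.single α 1) i := by
  have h := (hasDerivAt_pi.1 (hasDerivAt_updPhi hφ α)) i
  exact h.deriv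

lemma topsucc : (⊤ : ℕ∞) + 1 ≤ ((⊤:ℕ∞) : WithTop ℕ∞) := by
  exact_mod_cast le_of_eq (by simp)

lemma contDiff_pD {φ : (Fin k → ℝ) → (Fin n → ℝ)} (hφ : ContDiff ℝ (⊤:ℕ∞) φ)
    (i : Fin n) (α : Fin k) : ContDiff ℝ (⊤:ℕ∞) (pD φ i α) := by
  have h1 : ContDiff ℝ (⊤:ℕ∞) (fderiv ℝ φ) := hφ.fderiv_right topsucc
  have h2 : pD φ i α = fun x =>
      (ContinuousLinearMap.proj (R := ℝ) (φ := fun _ : Fin n => ℝ) i)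
        ((ContinuousLinearMap.apply ℝ (Fin n → ℝ) (Pi.single α 1)) (fderiv ℝ φ x)) := by
    funext x
    exact pD_eq (hφ.differentiable (by simp) x) i α
  rw [h2]
  exact (ContinuousLinearMap.proj i).contDiff.comp
    ((ContinuousLinearMap.apply ℝ (Fin n → ℝ) (Pi.single α 1)).contDiff.comp h1)

lemma contDiff_j1 {φ : (Fin k → ℝ) → (Fin n → ℝ)} (hφ : ContDiff ℝ (⊤:ℕ∞) φ) :
    ContDiff ℝ (⊤:ℕ∞) (fun x => ((x, φ x, fun i α => pD φ i α x) : Jet k n)) := by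
  refine contDiff_id.prodMk (hφ.prodMk ?_)
  exact contDiff_pi.2 fun i => contDiff_pi.2 fun α => contDiff_pD hφ i α

lemma contDiff_pdV {L : Jet k n → ℝ} (hL : ContDiff ℝ (⊤:ℕ∞) L) (i : Fin n) (α : Fin k) :
    ContDiff ℝ (⊤:ℕ∞) (pdV L i α) := by
  have h1 : ContDiff ℝ (⊤:ℕ∞) (fderiv ℝ L) := hL.fderiv_right topsucc
  have h2 : pdV L i α = fun z =>
      (ContinuousLinearMap.apply ℝ ℝ (eV k n i α)) (fderiv ℝ L z) := by
    funext z
    exact pdV_eq (hL.differentiable (by simp) z) i α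
  rw [h2]
  exact (ContinuousLinearMap.apply ℝ ℝ (eV k n i α)).contDiff.comp h1

lemma hasDerivAt_pD2 {φ : (Fin k → ℝ) → (Fin n → ℝ)} (hφ : ContDiff ℝ (⊤:ℕ∞) φ)
    (i : Fin n) (α β : Fin k) (x : Fin k → ℝ) :
    HasDerivAt (fun t => pD φ i β (Function.update x α t))
      (fderiv ℝ (fderiv ℝ φ) x (Pi.single α 1) (Pi.single β 1) i) (x α) := by
  have hdiffφ : Differentiable ℝ φ := hφ.differentiable (by simp)
  have h1 : ContDiff ℝ (⊤:ℕ∞) (fderiv ℝ φ) := hφ.fderiv_right topsucc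
  have hf'' : HasFDerivAt (fderiv ℝ φ) (fderiv ℝ (fderiv ℝ φ) x) x :=
    (h1.differentiable (by simp) x).hasFDerivAt
  set A : ((Fin k → ℝ) →L[ℝ] (Fin n → ℝ)) →L[ℝ] ℝ :=
    (ContinuousLinearMap.proj (R := ℝ) (φ := fun _ : Fin n => ℝ) i).comp
      (ContinuousLinearMap.apply ℝ (Fin n → ℝ) (Pi.single β 1)) with hA
  have h2 : HasFDerivAt (fun y => A (fderiv ℝ φ y))
      (A.comp (fderiv ℝ (fderiv ℝ φ) x)) x := A.hasFDerivAt.comp x hf''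
  have h3 : (fun y => A (fderiv ℝ φ y)) = pD φ i β := by
    funext y
    simp only [hA, ContinuousLinearMap.comp_apply, ContinuousLinearMap.apply_apply,
      ContinuousLinearMap.proj_apply]
    exact (pD_eq (hdiffφ y) i β).symm
  rw [h3] at h2
  have h4 := hasDerivAt_line (f := pD φ i β) h2.differentiableAt (Pi.single α 1) (x α)
  have h5 : fderiv ℝ (pD φ i β) x = A.comp (fderiv ℝ (fderiv ℝ φ) x) := h2.fderiv
  rw [h5] at h4
  simpa [hA, ← update_eq_line] using h4

lemma pD2_eq {φ : (Fin k → ℝ) → (Fin n → ℝ)} (hφ : ContDiff ℝ (⊤:ℕ∞) φ)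
    (i : Fin n) (α β : Fin k) (x : Fin k → ℝ) :
    pD2 φ i α β x = fderiv ℝ (fderiv ℝ φ) x (Pi.single α 1) (Pi.single β 1) i :=
  (hasDerivAt_pD2 hφ i α β x).deriv

lemma pD2_symm {φ : (Fin k → ℝ) → (Fin n → ℝ)} (hφ : ContDiff ℝ (⊤:ℕ∞) φ)
    (i : Fin n) (α β : Fin k) (x : Fin k → ℝ) :
    pD2 φ i α β x = pD2 φ i β α x := by
  rw [pD2_eq hφ, pD2_eq hφ]
  have hdiffφ : Differentiable ℝ φ := hφ.differentiable (by simp)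
  have h1 : ContDiff ℝ (⊤:ℕ∞) (fderiv ℝ φ) := hφ.fderiv_right topsucc
  have hf'' : HasFDerivAt (fderiv ℝ φ) (fderiv ℝ (fderiv ℝ φ) x) x :=
    (h1.differentiable (by simp) x).hasFDerivAt
  have := second_derivative_symmetric (fun y => (hdiffφ y).hasFDerivAt) hf''
    (Pi.single α 1) (Pi.single β 1)
  rw [this]

lemma jet_decomp (V : Jet k n) :
    V = (∑ α, V.1 α • eX k n α) + (∑ i, V.2.1 i • eQ k n i)
      + ∑ i, ∑ β, V.2.2 i β • eV k n i β := by
  refine Prod.ext ?_ (Prod.ext ?_ ?_)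
  · simp only [Prod.fst_add, Prod.fst_sum, Prod.smul_fst, eX, eQ, eV,
      smul_zero, Finset.sum_const_zero, add_zero]
    funext j
    simp [Finset.sum_apply, Pi.single_apply, Finset.sum_ite_eq', mul_comm]
  · simp only [Prod.snd_add, Prod.snd_sum, Prod.smul_snd, Prod.fst_add, Prod.fst_sum,
      Prod.smul_fst, eX, eQ, eV, smul_zero, Finset.sum_const_zero, add_zero, zero_add]
    funext j
    simp [Finset.sum_apply, Pi.single_apply, Finset.sum_ite_eq', mul_comm]
  · simp only [Prod.snd_add, Prod.snd_sum, Prod.smul_snd, eX, eQ, eV,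
      smul_zero, Finset.sum_const_zero, add_zero, zero_add]
    funext j β'
    rw [Finset.sum_apply, Finset.sum_apply]
    have : ∀ c : Fin n, (∑ β, V.2.2 c β • (Pi.single c (Pi.single β 1) : Fin n → Fin k → ℝ)) j β'
        = if j = c then V.2.2 c β' else 0 := by
      intro c
      rw [Finset.sum_apply, Finset.sum_apply]
      rcases eq_or_ne j c with h|h <;>
        simp [h, Pi.single_apply, Finset.sum_ite_eq', mul_comm]
    simp only [this]
    rw [Finset.sum_ite_eq]; simp

lemma clm_decomp (T : Jet k n →L[ℝ] ℝ) (V : Jet k n) :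
    T V = (∑ α, V.1 α * T (eX k n α)) + (∑ i, V.2.1 i * T (eQ k n i))
      + ∑ i, ∑ β, V.2.2 i β * T (eV k n i β) := by
  conv_lhs => rw [jet_decomp V]
  simp [map_add, map_sum, map_smul, smul_eq_mul]

lemma hasDerivAt_j1 {φ : (Fin k → ℝ) → (Fin n → ℝ)} (hφ : ContDiff ℝ (⊤:ℕ∞) φ)
    (x : Fin k → ℝ) (α : Fin k) :
    HasDerivAt (fun t => j1 φ (Function.update x α t))
      ((Pi.single α 1, fun i => pD φ i α x, fun i β => pD2 φ i α β x) : Jet k n) (x α) := by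
  have hdiffφ : Differentiable ℝ φ := hφ.differentiable (by simp)
  refine HasDerivAt.prodMk (hasDerivAt_update x α (x α)) (HasDerivAt.prodMk ?_ ?_)
  · refine hasDerivAt_pi.2 fun i => ?_
    have h := (hasDerivAt_pi.1 (hasDerivAt_updPhi (hdiffφ x) α)) i
    rwa [← pD_eq (hdiffφ x)] at h
  · refine hasDerivAt_pi.2 fun i => hasDerivAt_pi.2 fun β => ?_
    have h := hasDerivAt_pD2 hφ i α β x
    rwa [← pD2_eq hφ] at h

lemma hasDerivAt_comp_j1 {F : Jet k n → ℝ} (hF : ContDiff ℝ (⊤:ℕ∞) F)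
    {φ : (Fin k → ℝ) → (Fin n → ℝ)} (hφ : ContDiff ℝ (⊤:ℕ∞) φ)
    (x : Fin k → ℝ) (α : Fin k) :
    HasDerivAt (fun t => F (j1 φ (Function.update x α t)))
      (pdX F α (j1 φ x) + (∑ i, pD φ i α x * pdQ F i (j1 φ x))
        + ∑ i, ∑ β, pD2 φ i α β x * pdV F i β (j1 φ x)) (x α) := by
  have hdiffF : Differentiable ℝ F := hF.differentiable (by simp)
  have hc := hasDerivAt_j1 hφ x α
  have hx : Function.update x α (x α) = x := Function.update_eq_self α x
  have hF' : HasFDerivAt F (fderiv ℝ F (j1 φ x)) (j1 φ (Function.update x α (x α))) := by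
    rw [hx]; exact (hdiffF (j1 φ x)).hasFDerivAt
  have h := hF'.comp_hasDerivAt (x α) hc
  have hval : fderiv ℝ F (j1 φ x)
      ((Pi.single α 1, fun i => pD φ i α x, fun i β => pD2 φ i α β x) : Jet k n)
      = pdX F α (j1 φ x) + (∑ i, pD φ i α x * pdQ F i (j1 φ x))
        + ∑ i, ∑ β, pD2 φ i α β x * pdV F i β (j1 φ x) := by
    rw [clm_decomp]
    congr 1
    · congr 1
      · simp [Pi.single_apply, ite_mul, Finset.sum_ite_eq']
        exact (pdX_eq (hdiffF _) α).symm
      · exact Finset.sum_congr rfl fun i _ => by rw [← pdQ_eq (hdiffF _)]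
    · exact Finset.sum_congr rfl fun i _ => Finset.sum_congr rfl fun β _ => by
        rw [← pdV_eq (hdiffF _)]
  rw [hval] at h
  exact h

abbrev EE (k n : ℕ) := (Fin k → ℝ) × (Fin n → ℝ)

def eEX (k n : ℕ) (α : Fin k) : EE k n := (Pi.single α 1, 0)
def eEQ (k n : ℕ) (i : Fin n) : EE k n := (0, Pi.single i 1)

lemma pdEX_eq {f : (Fin k → ℝ) → (Fin n → ℝ) → ℝ}
    (hf : DifferentiableAt ℝ (fun p : EE k n => f p.1 p.2) (x, q)) (α : Fin k) :
    pdEX f α x q = fderiv ℝ (fun p : EE k n => f p.1 p.2) (x, q) (eEX k n α) := by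
  have h := hasDerivAt_line hf (eEX k n α) (x α)
  have hcurve : ∀ t : ℝ, ((x, q) : EE k n) + (t - x α) • eEX k n α
      = (Function.update x α t, q) := by
    intro t
    refine Prod.ext ?_ ?_ <;> simp [eEX, update_eq_line]
  refine HasDerivAt.deriv ?_
  simpa [hcurve] using h

lemma pdEQ_eq {f : (Fin k → ℝ) → (Fin n → ℝ) → ℝ}
    (hf : DifferentiableAt ℝ (fun p : EE k n => f p.1 p.2) (x, q)) (i : Fin n) :
    pdEQ f i x q = fderiv ℝ (fun p : EE k n => f p.1 p.2) (x, q) (eEQ k n i) := by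
  have h := hasDerivAt_line hf (eEQ k n i) (q i)
  have hcurve : ∀ t : ℝ, ((x, q) : EE k n) + (t - q i) • eEQ k n i
      = (x, Function.update q i t) := by
    intro t
    refine Prod.ext ?_ ?_ <;> simp [eEQ, update_eq_line]
  refine HasDerivAt.deriv ?_
  simpa [hcurve] using h

lemma ee_clm_decomp (T : EE k n →L[ℝ] ℝ) (V : EE k n) :
    T V = (∑ α, V.1 α * T (eEX k n α)) + ∑ i, V.2 i * T (eEQ k n i) := by
  have hV : V = (∑ α, V.1 α • eEX k n α) + ∑ i, V.2 i • eEQ k n i := by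
    refine Prod.ext ?_ ?_
    · simp only [Prod.fst_add, Prod.fst_sum, Prod.smul_fst, eEX, eEQ, smul_zero,
        Finset.sum_const_zero, add_zero]
      funext j
      simp [Finset.sum_apply, Pi.single_apply, Finset.sum_ite_eq', mul_comm]
    · simp only [Prod.snd_add, Prod.snd_sum, Prod.smul_snd, eEX, eEQ, smul_zero,
        Finset.sum_const_zero, zero_add]
      funext j
      simp [Finset.sum_apply, Pi.single_apply, Finset.sum_ite_eq', mul_comm]
  conv_lhs => rw [hV]
  simp [map_add, map_sum, map_smul, smul_eq_mul]

lemma hasDerivAt_base {f : (Fin k → ℝ) → (Fin n → ℝ) → ℝ}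
    (hf : ContDiff ℝ (⊤:ℕ∞) (fun p : EE k n => f p.1 p.2))
    {φ : (Fin k → ℝ) → (Fin n → ℝ)} (hφ : ContDiff ℝ (⊤:ℕ∞) φ)
    (x : Fin k → ℝ) (α : Fin k) :
    HasDerivAt (fun t => f (Function.update x α t) (φ (Function.update x α t)))
      (totalD f α (j1 φ x)) (x α) := by
  have hdiffφ : Differentiable ℝ φ := hφ.differentiable (by simp)
  have hdifff : Differentiable ℝ (fun p : EE k n => f p.1 p.2) :=
    hf.differentiable (by simp)
  have hc : HasDerivAt (fun t => ((Function.update x α t,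
      φ (Function.update x α t)) : EE k n))
      ((Pi.single α 1, fun j => pD φ j α x) : EE k n) (x α) := by
    refine HasDerivAt.prodMk (hasDerivAt_update x α (x α)) ?_
    refine hasDerivAt_pi.2 fun i => ?_
    have h := (hasDerivAt_pi.1 (hasDerivAt_updPhi (hdiffφ x) α)) i
    rwa [← pD_eq (hdiffφ x)] at h
  have hx : Function.update x α (x α) = x := Function.update_eq_self α x
  have hF' : HasFDerivAt (fun p : EE k n => f p.1 p.2)
      (fderiv ℝ (fun p : EE k n => f p.1 p.2) (x, φ x))
      ((Function.update x α (x α), φ (Function.update x α (x α))) : EE k n) := by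
    rw [hx]; exact (hdifff (x, φ x)).hasFDerivAt
  have h := hF'.comp_hasDerivAt (x α) hc
  have hval : fderiv ℝ (fun p : EE k n => f p.1 p.2) (x, φ x)
      ((Pi.single α 1, fun j => pD φ j α x) : EE k n) = totalD f α (j1 φ x) := by
    rw [ee_clm_decomp]
    unfold totalD
    congr 1
    · simp [Pi.single_apply, ite_mul, Finset.sum_ite_eq']
      exact (pdEX_eq (hdifff _) α).symm
    · exact Finset.sum_congr rfl fun i _ => by
        rw [← pdEQ_eq (hdifff _)]; rfl
  rw [hval] at h
  exact h

lemma key_alg {k n : ℕ} (pdXL b : Fin k → ℝ) (QL w : Fin n → ℝ)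
    (PV DP W u : Fin n → Fin k → ℝ) (S : Fin n → Fin k → Fin k → ℝ)
    (T : Fin k → Fin k → ℝ) (ℓ : ℝ)
    (hEL : ∀ i, ∑ α, DP i α = QL i)
    (hS : ∀ i α β, S i α β = S i β α)
    (hsym : (∑ α, b α * pdXL α) + (∑ i, w i * QL i)
      + (∑ i, ∑ α, (W i α - ∑ β, u i β * T β α) * PV i α)
      + ℓ * (∑ α, T α α) = 0) :
    ∑ α, ((∑ β, (((pdXL α + (∑ i, u i α * QL i) + ∑ i, ∑ β', S i α β' * PV i β')
            * (if α = β then (1:ℝ) else 0)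
          - ∑ i, (DP i α * u i β + PV i α * S i α β)) * b β
        + (ℓ * (if α = β then (1:ℝ) else 0) - ∑ i, PV i α * u i β) * T β α))
      + ∑ i, (DP i α * w i + PV i α * W i α)) = 0 := by
  set A : Fin k → ℝ := fun α =>
    pdXL α + (∑ i, u i α * QL i) + ∑ i, ∑ β', S i α β' * PV i β' with hA
  set C : Fin k → Fin k → ℝ := fun α β =>
    ∑ i, (DP i α * u i β + PV i α * S i α β) with hC
  set D : Fin k → Fin k → ℝ := fun α β => ∑ i, PV i α * u i β with hD
  have per : ∀ α, (∑ β, ((A α * (if α = β then (1:ℝ) else 0) - C α β) * b β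
      + (ℓ * (if α = β then (1:ℝ) else 0) - D α β) * T β α))
      = (A α * b α - ∑ β, C α β * b β) + (ℓ * T α α - ∑ β, D α β * T β α) := by
    intro α
    rw [Finset.sum_add_distrib]
    congr 1
    · simp only [sub_mul, mul_ite, mul_one, mul_zero, ite_mul, zero_mul]
      rw [Finset.sum_sub_distrib, Finset.sum_ite_eq]
      simp
    · simp only [sub_mul, mul_ite, mul_one, mul_zero, ite_mul, zero_mul]
      rw [Finset.sum_sub_distrib, Finset.sum_ite_eq]
      simp
  calc ∑ α, ((∑ β, ((A α * (if α = β then (1:ℝ) else 0) - C α β) * b β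
        + (ℓ * (if α = β then (1:ℝ) else 0) - D α β) * T β α))
        + ∑ i, (DP i α * w i + PV i α * W i α))
      = (∑ α, A α * b α) - (∑ α, ∑ β, C α β * b β)
        + ((ℓ * ∑ α, T α α) - ∑ α, ∑ β, D α β * T β α)
        + ((∑ α, ∑ i, DP i α * w i) + ∑ α, ∑ i, PV i α * W i α) := by
        rw [Finset.sum_add_distrib]
        congr 1
        · have hper := Finset.sum_congr
            (rfl : (Finset.univ : Finset (Fin k)) = Finset.univ) (fun α _ => per α)
          rw [hper, Finset.sum_add_distrib, Finset.sum_sub_distrib,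
            Finset.sum_sub_distrib, ← Finset.mul_sum]
        · have : ∀ α : Fin k, (∑ i, (DP i α * w i + PV i α * W i α))
              = (∑ i, DP i α * w i) + ∑ i, PV i α * W i α := fun α =>
            Finset.sum_add_distrib
          rw [Finset.sum_congr
            (rfl : (Finset.univ : Finset (Fin k)) = Finset.univ) (fun α _ => this α),
            Finset.sum_add_distrib]
    _ = 0 := by
        -- expand A and C
        have hS1 : (∑ α, A α * b α)
            = (∑ α, pdXL α * b α) + (∑ α, (∑ i, u i α * QL i) * b α)
              + ∑ α, (∑ i, ∑ β', S i α β' * PV i β') * b α := by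
          simp only [hA, add_mul, Finset.sum_add_distrib]
        have hS2 : (∑ α, ∑ β, C α β * b β)
            = (∑ α, ∑ β, ∑ i, DP i α * u i β * b β)
              + ∑ α, ∑ β, ∑ i, PV i α * S i α β * b β := by
          simp only [hC, add_mul, Finset.sum_add_distrib, ← Finset.sum_mul]
        -- EL cancellation
        have c1 : (∑ α, ∑ β, ∑ i, DP i α * u i β * b β)
            = ∑ α, (∑ i, u i α * QL i) * b α := by
          rw [Finset.sum_comm]
          refine Finset.sum_congr rfl fun β _ => ?_
          rw [Finset.sum_mul, Finset.sum_comm]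
          refine Finset.sum_congr rfl fun i _ => ?_
          rw [← Finset.sum_mul, ← Finset.sum_mul, hEL i]
          ring
        -- Schwarz cancellation
        have c2 : (∑ α, ∑ β, ∑ i, PV i α * S i α β * b β)
            = ∑ α, (∑ i, ∑ β', S i α β' * PV i β') * b α := by
          rw [Finset.sum_comm]
          refine Finset.sum_congr rfl fun β _ => ?_
          rw [Finset.sum_mul]
          rw [Finset.sum_comm]
          refine Finset.sum_congr rfl fun i _ => ?_
          rw [Finset.sum_mul]
          refine Finset.sum_congr rfl fun α _ => ?_
          rw [hS i α β]
          ring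
        have c3 : (∑ α, ∑ i, DP i α * w i) = ∑ i, w i * QL i := by
          rw [Finset.sum_comm]
          refine Finset.sum_congr rfl fun i _ => ?_
          rw [← Finset.sum_mul, hEL i]
          ring
        have c4 : (∑ α, ∑ β, D α β * T β α)
            = ∑ i, ∑ α, (∑ β, u i β * T β α) * PV i α := calc
          (∑ α, ∑ β, D α β * T β α)
              = ∑ α, ∑ β, ∑ i, PV i α * u i β * T β α := by
                simp only [hD, Finset.sum_mul]
            _ = ∑ α, ∑ i, ∑ β, PV i α * u i β * T β α :=
                Finset.sum_congr rfl fun α _ => Finset.sum_comm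
            _ = ∑ i, ∑ α, ∑ β, PV i α * u i β * T β α := Finset.sum_comm
            _ = ∑ i, ∑ α, (∑ β, u i β * T β α) * PV i α := by
                refine Finset.sum_congr rfl fun i _ => Finset.sum_congr rfl fun α _ => ?_
                rw [Finset.sum_mul]
                exact Finset.sum_congr rfl fun β _ => by ring
        have c0 : (∑ α, pdXL α * b α) = ∑ α, b α * pdXL α :=
          Finset.sum_congr rfl fun _ _ => mul_comm _ _
        have c5 : (∑ α, ∑ i, PV i α * W i α) = ∑ i, ∑ α, W i α * PV i α := by
          rw [Finset.sum_comm]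
          exact Finset.sum_congr rfl fun i _ => Finset.sum_congr rfl fun α _ =>
            mul_comm _ _
        have hexp : (∑ i, ∑ α, (W i α - ∑ β, u i β * T β α) * PV i α)
            = (∑ i, ∑ α, W i α * PV i α)
              - ∑ i, ∑ α, (∑ β, u i β * T β α) * PV i α := by
          simp only [sub_mul, Finset.sum_sub_distrib]
        rw [hexp] at hsym
        rw [hS1, hS2, c1, c2, c3, c4, c0, c5]
        linear_combination hsym

/-- Noether's theorem for variational symmetries: if the vector field
`X = X_α ∂/∂xᵅ + Xⁱ ∂/∂qⁱ` on `E` satisfies `X¹(L) + L·d_{T⁽⁰⁾_α}X_α = 0`, then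
`Gᵅ = Θᵅ_L(X¹)` defines a conservation law. -/
theorem statement10 (k n : ℕ) (hk : 1 ≤ k) (hn : 1 ≤ n)
    (L : Jet k n → ℝ) (hL : ContDiff ℝ (⊤ : ℕ∞) L)
    (Xb : Fin k → (Fin k → ℝ) → (Fin n → ℝ) → ℝ)
    (hXb : ∀ α, ContDiff ℝ (⊤ : ℕ∞)
      (fun p : (Fin k → ℝ) × (Fin n → ℝ) => Xb α p.1 p.2))
    (Xv : Fin n → (Fin k → ℝ) → (Fin n → ℝ) → ℝ)
    (hXv : ∀ i, ContDiff ℝ (⊤ : ℕ∞)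
      (fun p : (Fin k → ℝ) × (Fin n → ℝ) => Xv i p.1 p.2))
    (hvarsym : ∀ z : Jet k n,
      ((∑ α : Fin k, Xb α z.1 z.2.1 * pdX L α z)
        + (∑ i : Fin n, Xv i z.1 z.2.1 * pdQ L i z)
        + ∑ i : Fin n, ∑ α : Fin k,
            (totalD (Xv i) α z
              - ∑ β : Fin k, z.2.2 i β * totalD (Xb β) α z) * pdV L i α z)
      + L z * (∑ α : Fin k, totalD (Xb α) α z) = 0) :
    IsConservationLaw L
      (fun α z =>
        (∑ β : Fin k,
          (L z * (if α = β then (1 : ℝ) else 0)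
            - ∑ i : Fin n, pdV L i α z * z.2.2 i β) * Xb β z.1 z.2.1)
        + ∑ i : Fin n, pdV L i α z * Xv i z.1 z.2.1) := by
  intro φ hsol x
  obtain ⟨hφ, hEL⟩ := hsol
  set z := j1 φ x with hz
  set DP : Fin n → Fin k → ℝ := fun i α =>
    deriv (fun t => pdV L i α (j1 φ (Function.update x α t))) (x α) with hDP
  have key : ∀ α : Fin k, HasDerivAt
      (fun t =>
        (∑ β : Fin k,
          (L (j1 φ (Function.update x α t)) * (if α = β then (1 : ℝ) else 0)
            - ∑ i : Fin n, pdV L i α (j1 φ (Function.update x α t))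
                * (j1 φ (Function.update x α t)).2.2 i β)
            * Xb β (j1 φ (Function.update x α t)).1 (j1 φ (Function.update x α t)).2.1)
        + ∑ i : Fin n, pdV L i α (j1 φ (Function.update x α t))
            * Xv i (j1 φ (Function.update x α t)).1 (j1 φ (Function.update x α t)).2.1)
      ((∑ β : Fin k,
        (((pdX L α z + (∑ i, pD φ i α x * pdQ L i z)
              + ∑ i, ∑ β', pD2 φ i α β' x * pdV L i β' z)
            * (if α = β then (1:ℝ) else 0)
          - ∑ i, (DP i α * pD φ i β x + pdV L i α z * pD2 φ i α β x))
            * Xb β z.1 z.2.1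
        + (L z * (if α = β then (1:ℝ) else 0) - ∑ i, pdV L i α z * pD φ i β x)
            * totalD (Xb β) α z))
      + ∑ i, (DP i α * Xv i z.1 z.2.1 + pdV L i α z * totalD (Xv i) α z))
      (x α) := by
    intro α
    have hℓ := hasDerivAt_comp_j1 hL hφ x α
    have hP : ∀ i : Fin n, HasDerivAt
        (fun t => pdV L i α (j1 φ (Function.update x α t))) (DP i α) (x α) :=
      fun i => (hasDerivAt_comp_j1 (contDiff_pdV hL i α) hφ x α).differentiableAt.hasDerivAt
    have hu : ∀ (i : Fin n) (β : Fin k), HasDerivAt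
        (fun t => (j1 φ (Function.update x α t)).2.2 i β) (pD2 φ i α β x) (x α) := by
      intro i β
      have h := hasDerivAt_pD2 hφ i α β x
      rw [← pD2_eq hφ] at h
      exact h
    have hb : ∀ β : Fin k, HasDerivAt
        (fun t => Xb β (j1 φ (Function.update x α t)).1 (j1 φ (Function.update x α t)).2.1)
        (totalD (Xb β) α z) (x α) := fun β => hasDerivAt_base (hXb β) hφ x α
    have hw : ∀ i : Fin n, HasDerivAt
        (fun t => Xv i (j1 φ (Function.update x α t)).1 (j1 φ (Function.update x α t)).2.1)
        (totalD (Xv i) α z) (x α) := fun i => hasDerivAt_base (hXv i) hφ x α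
    have h := HasDerivAt.fun_add
      (HasDerivAt.fun_sum (u := Finset.univ) fun β _ =>
        ((hℓ.mul_const (if α = β then (1:ℝ) else 0)).fun_sub
          (HasDerivAt.fun_sum (u := Finset.univ) fun i _ => (hP i).fun_mul (hu i β))).fun_mul (hb β))
      (HasDerivAt.fun_sum (u := Finset.univ) fun i _ => (hP i).fun_mul (hw i))
    simp only [Function.update_eq_self, hz] at h
    exact h
  refine Eq.trans (Finset.sum_congr rfl fun α _ => (key α).deriv) ?_
  refine key_alg (fun α => pdX L α z) (fun β => Xb β z.1 z.2.1)
    (fun i => pdQ L i z) (fun i => Xv i z.1 z.2.1)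
    (fun i α => pdV L i α z) DP (fun i α => totalD (Xv i) α z)
    (fun i β => pD φ i β x) (fun i α β => pD2 φ i α β x)
    (fun β α => totalD (Xb β) α z) (L z)
    (fun i => hEL i x) (fun i α β => pD2_symm hφ i α β x) ?_
  exact hvarsym z
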